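/- For an integer m ≥ 3, let Ω denote the m × m real matrix with rows and columns indexed by 0, 1, …, m−1, whose entries are: Ω(0,1) = 2; Ω(i,j) = 1 whenever |i − j| = 1 and (i,j) ≠ (0,1); Ω(m−1,0) = 1; and all other entries equal 0. If m is odd, then for every t ∈ ℝ the (0,0) entry of the matrix exponential exp(tΩ) equals (1/m)·( e^{2t} + 2·Σ_{q=1}^{(m−1)/2} e^{2t·cos(2πq/m)} ). -/

import Mathlib

open scoped BigOperators
open scoped Matrix

/-- The `m × m` comparison matrix `Ω`: `Ω 0 1 = 2`, `Ω i j = 1` when `|i − j| = 1`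
and `(i,j) ≠ (0,1)`, `Ω (m−1) 0 = 1`, all other entries `0`. -/
def OmegaMat (m : ℕ) : Matrix (Fin m) (Fin m) ℝ := fun i j =>
  if i.val = 0 ∧ j.val = 1 then 2
  else if i.val + 1 = j.val ∨ j.val + 1 = i.val then 1
  else if i.val = m - 1 ∧ j.val = 0 then 1
  else 0

/-- The eigenvector `u_q(k) = cos(2πqk/m)` of `Ω`. -/
noncomputable def uVec (m q : ℕ) : Fin m → ℝ := fun k =>
  Real.cos (2 * Real.pi * q * k / m)

/-- A sum over `Fin m` of a function supported on two distinct points. -/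
lemma sum_eq_pair {m : ℕ} (f : Fin m → ℝ) (j₁ j₂ : Fin m) (h : j₁ ≠ j₂)
    (hf : ∀ j, j ≠ j₁ → j ≠ j₂ → f j = 0) :
    ∑ j, f j = f j₁ + f j₂ := by
  rw [← Finset.sum_subset (Finset.subset_univ ({j₁, j₂} : Finset (Fin m)))]
  · rw [Finset.sum_pair h]
  · intro x _ hx
    simp only [Finset.mem_insert, Finset.mem_singleton, not_or] at hx
    exact hf x hx.1 hx.2

/-- The eigenvalue equation `Ω u_q = 2 cos(2πq/m) · u_q`. -/
lemma omega_mulVec (m : ℕ) (hm : 3 ≤ m) (q : ℕ) :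
    OmegaMat m *ᵥ uVec m q = (2 * Real.cos (2 * Real.pi * q / m)) • uVec m q := by
  have hmR : (m : ℝ) ≠ 0 := by positivity
  funext i
  have entry : (OmegaMat m *ᵥ uVec m q) i = ∑ j, OmegaMat m i j * uVec m q j := rfl
  rw [entry]
  rcases i with ⟨iv, hi⟩
  by_cases h0 : iv = 0
  · subst h0
    have h1 : (1 : ℕ) < m := by omega
    rw [Finset.sum_eq_single (⟨1, h1⟩ : Fin m)]
    · have e1 : OmegaMat m ⟨0, hi⟩ ⟨1, h1⟩ = 2 := by
        simp only [OmegaMat, Fin.val_mk]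
        split_ifs with ha hb hc <;>
          first
              | rfl
              | (exfalso; omega)
              | (exfalso; simp_all)
              | (exfalso;
                  simp only [true_and, and_true, or_false, false_or, false_and, and_false,
                    not_true, not_false_iff] at *
                  <;> omega)
      rw [e1]
      show 2 * Real.cos (2 * Real.pi * q * (1:ℕ) / m)
          = 2 * Real.cos (2 * Real.pi * q / m) * Real.cos (2 * Real.pi * q * (0:ℕ) / m)
      push_cast
      norm_num
    · intro j _ hj
      have : OmegaMat m ⟨0, hi⟩ j = 0 := by
        have hjv : j.val ≠ 1 := by
          intro hv; exact hj (Fin.ext hv)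
        simp only [OmegaMat, Fin.val_mk]
        split_ifs with ha hb hc <;>
          first
              | rfl
              | (exfalso; omega)
              | (exfalso; simp_all)
              | (exfalso;
                  simp only [true_and, and_true, or_false, false_or, false_and, and_false,
                    not_true, not_false_iff] at *
                  <;> omega)
      rw [this, zero_mul]
    · intro h; exact absurd (Finset.mem_univ _) h
  · by_cases hlast : iv = m - 1
    · subst hlast
      have hA : m - 2 < m := by omega
      have hB : 0 < m := by omega
      have hne : (⟨m - 2, hA⟩ : Fin m) ≠ ⟨0, hB⟩ := by
        intro h; simp only [Fin.mk.injEq] at h; omega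
      rw [sum_eq_pair _ ⟨m - 2, hA⟩ ⟨0, hB⟩ hne]
      · have e1 : OmegaMat m ⟨m - 1, hi⟩ ⟨m - 2, hA⟩ = 1 := by
          simp only [OmegaMat, Fin.val_mk]
          split_ifs with ha hb hc <;>
            first
              | rfl
              | (exfalso; omega)
              | (exfalso; simp_all)
              | (exfalso;
                  simp only [true_and, and_true, or_false, false_or, false_and, and_false,
                    not_true, not_false_iff] at *
                  <;> omega)
        have e2 : OmegaMat m ⟨m - 1, hi⟩ ⟨0, hB⟩ = 1 := by
          simp only [OmegaMat, Fin.val_mk]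
          split_ifs with ha hb hc <;>
            first
              | rfl
              | (exfalso; omega)
              | (exfalso; simp_all)
              | (exfalso;
                  simp only [true_and, and_true, or_false, false_or, false_and, and_false,
                    not_true, not_false_iff] at *
                  <;> omega)
        rw [e1, e2, one_mul, one_mul]
        show Real.cos (2 * Real.pi * q * ((m:ℕ) - 2 : ℕ) / m) + Real.cos (2 * Real.pi * q * (0:ℕ) / m)
            = 2 * Real.cos (2 * Real.pi * q / m) * Real.cos (2 * Real.pi * q * ((m:ℕ) - 1 : ℕ) / m)
        have c2 : ((m - 2 : ℕ) : ℝ) = (m : ℝ) - 2 := by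
          have : (2:ℕ) ≤ m := by omega
          push_cast [Nat.cast_sub this]; ring
        have c1 : ((m - 1 : ℕ) : ℝ) = (m : ℝ) - 1 := by
          have : (1:ℕ) ≤ m := by omega
          push_cast [Nat.cast_sub this]; ring
        rw [c1, c2]
        have a2 : 2 * Real.pi * q * ((m:ℝ) - 2) / m
            = (q : ℝ) * (2 * Real.pi) - 2 * (2 * Real.pi * q / m) := by
          field_simp
        have a1 : 2 * Real.pi * q * ((m:ℝ) - 1) / m
            = (q : ℝ) * (2 * Real.pi) - (2 * Real.pi * q / m) := by
          field_simp
        rw [a1, a2, Real.cos_nat_mul_two_pi_sub, Real.cos_nat_mul_two_pi_sub]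
        rw [show (2 : ℝ) * (2 * Real.pi * q / m) = 2 * (2 * Real.pi * q / m) by ring,
          Real.cos_two_mul]
        norm_num
        ring
      · intro j hj1 hj2
        have hv1 : j.val ≠ m - 2 := fun hv => hj1 (Fin.ext hv)
        have hv2 : j.val ≠ 0 := fun hv => hj2 (Fin.ext hv)
        have : OmegaMat m ⟨m - 1, hi⟩ j = 0 := by
          have := j.isLt
          simp only [OmegaMat, Fin.val_mk]
          split_ifs with ha hb hc <;>
            first
              | rfl
              | (exfalso; omega)
              | (exfalso; simp_all)
              | (exfalso;
                  simp only [true_and, and_true, or_false, false_or, false_and, and_false,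
                    not_true, not_false_iff] at *
                  <;> omega)
        rw [this, zero_mul]
    · -- middle rows
      have h1 : iv - 1 < m := by omega
      have h2 : iv + 1 < m := by omega
      have hne : (⟨iv - 1, h1⟩ : Fin m) ≠ ⟨iv + 1, h2⟩ := by
        intro h; simp only [Fin.mk.injEq] at h; omega
      rw [sum_eq_pair _ ⟨iv - 1, h1⟩ ⟨iv + 1, h2⟩ hne]
      · have e1 : OmegaMat m ⟨iv, hi⟩ ⟨iv - 1, h1⟩ = 1 := by
          simp only [OmegaMat, Fin.val_mk]
          split_ifs with ha hb hc <;>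
            first
              | rfl
              | (exfalso; omega)
              | (exfalso; simp_all)
              | (exfalso;
                  simp only [true_and, and_true, or_false, false_or, false_and, and_false,
                    not_true, not_false_iff] at *
                  <;> omega)
        have e2 : OmegaMat m ⟨iv, hi⟩ ⟨iv + 1, h2⟩ = 1 := by
          simp only [OmegaMat, Fin.val_mk]
          split_ifs with ha hb hc <;>
            first
              | rfl
              | (exfalso; omega)
              | (exfalso; simp_all)
              | (exfalso;
                  simp only [true_and, and_true, or_false, false_or, false_and, and_false,
                    not_true, not_false_iff] at *
                  <;> omega)
        rw [e1, e2, one_mul, one_mul]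
        show Real.cos (2 * Real.pi * q * ((iv - 1 : ℕ) : ℝ) / m)
              + Real.cos (2 * Real.pi * q * ((iv + 1 : ℕ) : ℝ) / m)
            = 2 * Real.cos (2 * Real.pi * q / m) * Real.cos (2 * Real.pi * q * (iv : ℝ) / m)
        have c1 : ((iv - 1 : ℕ) : ℝ) = (iv : ℝ) - 1 := by
          have : (1:ℕ) ≤ iv := by omega
          push_cast [Nat.cast_sub this]; ring
        rw [c1]
        have a1 : 2 * Real.pi * q * ((iv:ℝ) - 1) / m
            = 2 * Real.pi * q * (iv : ℝ) / m - 2 * Real.pi * q / m := by ring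
        have a2 : 2 * Real.pi * q * ((iv + 1 : ℕ) : ℝ) / m
            = 2 * Real.pi * q * (iv : ℝ) / m + 2 * Real.pi * q / m := by push_cast; ring
        rw [a1, a2, Real.cos_sub, Real.cos_add]
        ring
      · intro j hj1 hj2
        have hv1 : j.val ≠ iv - 1 := fun hv => hj1 (Fin.ext hv)
        have hv2 : j.val ≠ iv + 1 := fun hv => hj2 (Fin.ext hv)
        have : OmegaMat m ⟨iv, hi⟩ j = 0 := by
          simp only [OmegaMat, Fin.val_mk]
          split_ifs with ha hb hc <;>
            first
              | rfl
              | (exfalso; omega)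
              | (exfalso; simp_all)
              | (exfalso;
                  simp only [true_and, and_true, or_false, false_or, false_and, and_false,
                    not_true, not_false_iff] at *
                  <;> omega)
        rw [this, zero_mul]

/-- Exponential applied to an eigenvector. -/
lemma exp_mulVec_eigen {m : ℕ} (A : Matrix (Fin m) (Fin m) ℝ) (v : Fin m → ℝ) (μ : ℝ)
    (h : A *ᵥ v = μ • v) :
    (NormedSpace.exp A) *ᵥ v = Real.exp μ • v := by
  letI : SeminormedRing (Matrix (Fin m) (Fin m) ℝ) := Matrix.linftyOpSemiNormedRing
  letI : NormedRing (Matrix (Fin m) (Fin m) ℝ) := Matrix.linftyOpNormedRing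
  letI : NormedAlgebra ℝ (Matrix (Fin m) (Fin m) ℝ) := Matrix.linftyOpNormedAlgebra
  have hpow : ∀ n : ℕ, A ^ n *ᵥ v = μ ^ n • v := by
    intro n
    induction n with
    | zero => simp [Matrix.one_mulVec]
    | succ n ih =>
      rw [pow_succ', ← Matrix.mulVec_mulVec, ih, Matrix.mulVec_smul, h, smul_smul, ← pow_succ]
  have hsum : Summable (fun n : ℕ => ((Nat.factorial n : ℝ))⁻¹ • A ^ n) := NormedSpace.expSeries_summable' A
  let L : Matrix (Fin m) (Fin m) ℝ →ₗ[ℝ] (Fin m → ℝ) :=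
    { toFun := fun M => M *ᵥ v
      map_add' := fun M N => Matrix.add_mulVec M N v
      map_smul' := fun c M => Matrix.smul_mulVec c M v }
  let Lc : Matrix (Fin m) (Fin m) ℝ →L[ℝ] (Fin m → ℝ) := LinearMap.toContinuousLinearMap L
  have hLc : ∀ M, Lc M = M *ᵥ v := fun M => rfl
  have key : (NormedSpace.exp A) *ᵥ v = ∑' n : ℕ, ((Nat.factorial n : ℝ))⁻¹ • (A ^ n *ᵥ v) := by
    rw [NormedSpace.exp_eq_tsum ℝ, ← hLc, ContinuousLinearMap.map_tsum Lc hsum]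
    congr 1
    funext n
    rw [map_smul, hLc]
  rw [key]
  have : ∀ n : ℕ, ((Nat.factorial n : ℝ))⁻¹ • (A ^ n *ᵥ v) = (((Nat.factorial n : ℝ))⁻¹ * μ ^ n) • v := by
    intro n; rw [hpow n, smul_smul]
  simp_rw [this]
  have hsum2 : Summable (fun n : ℕ => ((Nat.factorial n : ℝ))⁻¹ * μ ^ n) := by
    simpa using NormedSpace.expSeries_summable' (𝕂 := ℝ) μ
  rw [Summable.tsum_smul_const hsum2]
  congr 1
  rw [Real.exp_eq_exp_ℝ, NormedSpace.exp_eq_tsum ℝ]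
  simp [smul_eq_mul]

/-- Roots-of-unity cosine sum. -/
lemma cos_sum_eq_zero (m k : ℕ) (hk : 0 < k) (hkm : k < m) :
    ∑ q ∈ Finset.range m, Real.cos (2 * Real.pi * q * k / m) = 0 := by
  have hm0 : 0 < m := by omega
  have hmR : (m : ℝ) ≠ 0 := by positivity
  set z : ℂ := Complex.exp ((2 * Real.pi * k / m : ℝ) * Complex.I) with hzdef
  have hz1 : z ≠ 1 := by
    rw [hzdef, Ne, Complex.exp_eq_one_iff]
    rintro ⟨n, hn⟩
    have hn' : ((2 * Real.pi * k / m : ℝ) : ℂ) = (((n : ℝ) * (2 * Real.pi) : ℝ) : ℂ) := by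
      refine mul_right_cancel₀ Complex.I_ne_zero ?_
      rw [hn]; push_cast; ring
    have hre : 2 * Real.pi * k / m = (n : ℝ) * (2 * Real.pi) := Complex.ofReal_inj.mp hn'
    have h2π : (2 * Real.pi) ≠ 0 := by positivity
    have hdiv : (k : ℝ) / m = (n : ℝ) := by
      apply mul_left_cancel₀ h2π
      rw [show 2 * Real.pi * ((k:ℝ)/m) = 2 * Real.pi * k / m by ring, hre]; ring
    have hk' : (k : ℝ) = (n : ℝ) * m := by
      field_simp at hdiv
      linarith [hdiv]
    have hkZ : (k : ℤ) = n * m := by exact_mod_cast hk'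
    rcases le_or_gt n 0 with hn0 | hn0
    · have : (n : ℤ) * m ≤ 0 := mul_nonpos_of_nonpos_of_nonneg hn0 (by positivity)
      omega
    · have h1n : (1 : ℤ) ≤ n := hn0
      have : (m : ℤ) ≤ n * m := le_mul_of_one_le_left (by positivity) h1n
      omega
  have hzm : z ^ m = 1 := by
    rw [hzdef, ← Complex.exp_nat_mul]
    have : (m : ℂ) * (((2 * Real.pi * k / m : ℝ) : ℂ) * Complex.I)
        = (k : ℤ) * (2 * (Real.pi : ℂ) * Complex.I) := by
      have hmC : (m : ℂ) ≠ 0 := by exact_mod_cast hmR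
      push_cast
      field_simp
    rw [this, Complex.exp_int_mul_two_pi_mul_I]
  have hgeom : ∑ q ∈ Finset.range m, z ^ q = 0 := by
    rw [geom_sum_eq hz1, hzm]
    simp
  have hre := congrArg Complex.re hgeom
  rw [Complex.re_sum] at hre
  have hterm : ∀ q : ℕ, (z ^ q).re = Real.cos (2 * Real.pi * q * k / m) := by
    intro q
    rw [hzdef, ← Complex.exp_nat_mul]
    have : (q : ℂ) * (((2 * Real.pi * k / m : ℝ) : ℂ) * Complex.I)
        = ((2 * Real.pi * q * k / m : ℝ) : ℂ) * Complex.I := by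
      push_cast; ring
    rw [this, Complex.exp_ofReal_mul_I_re]
  simp_rw [hterm] at hre
  simpa using hre

/-- Decomposition of the first standard basis vector. -/
lemma single_eq_sum (m : ℕ) (hm : 3 ≤ m) :
    Pi.single (⟨0, by linarith⟩ : Fin m) (1 : ℝ)
      = (m : ℝ)⁻¹ • ∑ q ∈ Finset.range m, uVec m q := by
  have hmR : (m : ℝ) ≠ 0 := by positivity
  funext k
  rw [Pi.smul_apply, Finset.sum_apply, smul_eq_mul]
  by_cases hk : k = (⟨0, by linarith⟩ : Fin m)
  · subst hk
    rw [Pi.single_eq_same]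
    have : ∀ q ∈ Finset.range m, uVec m q (⟨0, by linarith⟩ : Fin m) = 1 := by
      intro q _
      show Real.cos (2 * Real.pi * q * ((0:ℕ) : ℝ) / m) = 1
      norm_num
    rw [Finset.sum_congr rfl this]
    simp [hmR]
  · rw [Pi.single_eq_of_ne hk]
    have hkv : 0 < k.val := by
      rcases Nat.eq_zero_or_pos k.val with h | h
      · exact absurd (Fin.ext h) hk
      · exact h
    have : ∀ q ∈ Finset.range m, uVec m q k = Real.cos (2 * Real.pi * q * k.val / m) := by
      intro q _; rfl
    rw [Finset.sum_congr rfl this, cos_sum_eq_zero m k.val hkv k.isLt, mul_zero]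

/-- For odd `m ≥ 3`, the `(0,0)` entry of `exp(tΩ)` equals
`(1/m)·(e^{2t} + 2·Σ_{q=1}^{(m−1)/2} e^{2t·cos(2πq/m)})`. -/
theorem stmt6 (m : ℕ) (hm : 3 ≤ m) (hodd : Odd m) (t : ℝ) :
    (NormedSpace.exp (t • OmegaMat m)) ⟨0, by omega⟩ ⟨0, by omega⟩ =
      (1 / (m : ℝ)) * (Real.exp (2 * t) +
        2 * ∑ q ∈ Finset.Icc 1 ((m - 1) / 2),
          Real.exp (2 * t * Real.cos (2 * Real.pi * q / m))) := by
  have hmR : (m : ℝ) ≠ 0 := by positivity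
  set E := NormedSpace.exp (t • OmegaMat m) with hE
  have hstep : E ⟨0, by omega⟩ ⟨0, by omega⟩
      = (E *ᵥ Pi.single (⟨0, by omega⟩ : Fin m) (1 : ℝ)) ⟨0, by omega⟩ := by
    rw [Matrix.mulVec_single]
    simp
  rw [hstep, single_eq_sum m hm, Matrix.mulVec_smul]
  have hsum : E *ᵥ (∑ q ∈ Finset.range m, uVec m q)
      = ∑ q ∈ Finset.range m, E *ᵥ uVec m q := by
    simpa only [Matrix.mulVecLin_apply] using
      map_sum (Matrix.mulVecLin E) (fun q => uVec m q) (Finset.range m)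
  rw [hsum]
  have heig : ∀ q : ℕ, E *ᵥ uVec m q
      = Real.exp (t * (2 * Real.cos (2 * Real.pi * q / m))) • uVec m q := by
    intro q
    apply exp_mulVec_eigen
    rw [Matrix.smul_mulVec, omega_mulVec m hm q, smul_smul]
  rw [Finset.sum_congr rfl (fun q _ => heig q)]
  have hval0 : ∀ q : ℕ, uVec m q (⟨0, by omega⟩ : Fin m) = 1 := by
    intro q
    show Real.cos (2 * Real.pi * q * ((0:ℕ) : ℝ) / m) = 1
    norm_num
  rw [Pi.smul_apply, Finset.sum_apply, smul_eq_mul]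
  have : ∀ q ∈ Finset.range m,
      (Real.exp (t * (2 * Real.cos (2 * Real.pi * q / m))) • uVec m q) (⟨0, by omega⟩ : Fin m)
        = Real.exp (2 * t * Real.cos (2 * Real.pi * q / m)) := by
    intro q _
    rw [Pi.smul_apply, hval0 q, smul_eq_mul, mul_one]
    ring_nf
  rw [Finset.sum_congr rfl this]
  -- Now the scalar sum computation
  obtain ⟨h, hh⟩ : ∃ h, m = 2 * h + 1 := hodd
  have hh2 : (m - 1) / 2 = h := by omega
  rw [hh2]
  set f : ℕ → ℝ := fun q => Real.exp (2 * t * Real.cos (2 * Real.pi * q / m)) with hf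
  have hrefl : ∀ q : ℕ, 0 < q → q < m → f (m - q) = f q := by
    intro q hq hqm
    have hc : ((m - q : ℕ) : ℝ) = (m : ℝ) - q := by
      push_cast [Nat.cast_sub (le_of_lt hqm)]; ring
    show Real.exp (2 * t * Real.cos (2 * Real.pi * ((m - q : ℕ) : ℝ) / m)) = f q
    rw [hc]
    have : 2 * Real.pi * ((m : ℝ) - q) / m = 2 * Real.pi - 2 * Real.pi * q / m := by
      field_simp
    rw [this, Real.cos_two_pi_sub]
  have hsplit : ∑ q ∈ Finset.range m, f q = f 0 + 2 * ∑ q ∈ Finset.Icc 1 h, f q := by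
    rw [hh, Finset.sum_range_succ' f (2 * h)]
    have hIco : ∑ q ∈ Finset.range (2 * h), f (q + 1)
        = ∑ q ∈ Finset.Ico 0 h, f (q + 1) + ∑ q ∈ Finset.Ico h (2 * h), f (q + 1) := by
      rw [Finset.sum_Ico_consecutive _ (Nat.zero_le h) (by omega), Finset.range_eq_Ico]
    have hsecond : ∑ q ∈ Finset.Ico h (2 * h), f (q + 1) = ∑ q ∈ Finset.Ico 0 h, f (q + 1) := by
      apply Finset.sum_nbij' (fun q => 2 * h - 1 - q) (fun q => 2 * h - 1 - q)
      · intro a ha; simp only [Finset.mem_Ico] at *; omega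
      · intro a ha; simp only [Finset.mem_Ico] at *; omega
      · intro a ha; simp only [Finset.mem_Ico] at ha; omega
      · intro a ha; simp only [Finset.mem_Ico] at ha; omega
      · intro a ha
        simp only [Finset.mem_Ico] at ha
        have h1 : 2 * h - 1 - a + 1 = m - (a + 1) := by omega
        rw [h1, hrefl (a + 1) (by omega) (by omega)]
    have hIcc : ∑ q ∈ Finset.Ico 0 h, f (q + 1) = ∑ q ∈ Finset.Icc 1 h, f q := by
      apply Finset.sum_nbij' (fun q => q + 1) (fun q => q - 1)
      · intro a ha; simp only [Finset.mem_Ico, Finset.mem_Icc] at *; omega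
      · intro a ha; simp only [Finset.mem_Ico, Finset.mem_Icc] at *; omega
      · intro a _; omega
      · intro a ha; simp only [Finset.mem_Icc] at ha; omega
      · intro a ha; simp only [Finset.mem_Ico] at ha; rfl
    rw [hIco, hsecond, hIcc]
    ring
  have hf0 : f 0 = Real.exp (2 * t) := by
    show Real.exp (2 * t * Real.cos (2 * Real.pi * ((0:ℕ):ℝ) / m)) = Real.exp (2 * t)
    norm_num
  rw [show (∑ q ∈ Finset.range m, Real.exp (2 * t * Real.cos (2 * Real.pi * q / m)))
      = ∑ q ∈ Finset.range m, f q from rfl, hsplit, hf0]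
  rw [one_div]
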